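/- Let eₙ be the number of critical points of fⁿ in (a,b) and let sₙ be the number of x ∈ (a,b) with fⁿ(x) = x_c, fⁱ(x) ≠ x_c for 0 ≤ i ≤ n-1, and (fⁿ)'(x) ≠ 0. Then for all n ≥ 2, eₙ = e_{n-1} + s_{n-1}. -/

import Mathlib

open Set

theorem crit_count_recursion
    (a b x_c : ℝ) (f : ℝ → ℝ) (hab : a < b)
    (hmap : Set.MapsTo f (Set.Icc a b) (Set.Icc a b))
    (hf : ContDiff ℝ 2 f)
    (hxc : x_c ∈ Set.Ioo a b)
    (h2 : deriv (deriv f) x_c < 0)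
    (hup : ∀ x ∈ Set.Ico a x_c, 0 < deriv f x)
    (hdn : ∀ x ∈ Set.Ioc x_c b, deriv f x < 0)
    (hfin : ∀ n : ℕ, 1 ≤ n → {x ∈ Ioo a b | deriv (f^[n]) x = 0}.Finite) :
    ∀ n : ℕ, 2 ≤ n →
      {x ∈ Ioo a b | deriv (f^[n]) x = 0}.ncard =
        {x ∈ Ioo a b | deriv (f^[n-1]) x = 0}.ncard +
        {x ∈ Ioo a b | f^[n-1] x = x_c ∧ (∀ i : ℕ, i ≤ n - 2 → f^[i] x ≠ x_c) ∧
          deriv (f^[n-1]) x ≠ 0}.ncard := by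
  have hdf : Differentiable ℝ f := hf.differentiable (by norm_num)
  have hcont : Continuous (deriv f) := hf.continuous_deriv (by norm_num)
  -- deriv f x_c = 0
  have hkey : deriv f x_c = 0 := by
    have h1 : 0 ≤ deriv f x_c := by
      have ht : Filter.Tendsto (deriv f) (nhdsWithin x_c (Set.Iio x_c)) (nhds (deriv f x_c)) :=
        (hcont.continuousAt).continuousWithinAt.tendsto
      refine ge_of_tendsto ht ?_
      filter_upwards [Ioo_mem_nhdsLT hxc.1] with x hx
      exact (hup x ⟨hx.1.le, hx.2⟩).le
    have h2' : deriv f x_c ≤ 0 := by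
      have ht : Filter.Tendsto (deriv f) (nhdsWithin x_c (Set.Ioi x_c)) (nhds (deriv f x_c)) :=
        (hcont.continuousAt).continuousWithinAt.tendsto
      refine le_of_tendsto ht ?_
      filter_upwards [Ioo_mem_nhdsGT hxc.2] with x hx
      exact (hdn x ⟨hx.1, hx.2.le⟩).le
    linarith
  -- f' vanishes on [a,b] only at x_c
  have hzero : ∀ y ∈ Icc a b, (deriv f y = 0 ↔ y = x_c) := by
    intro y hy
    constructor
    · intro h
      rcases lt_trichotomy y x_c with h' | h' | h'
      · exact absurd h (ne_of_gt (hup y ⟨hy.1, h'⟩))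
      · exact h'
      · exact absurd h (ne_of_lt (hdn y ⟨h', hy.2⟩))
    · intro h; rw [h]; exact hkey
  -- chain rule for iterates
  have hchain : ∀ (m : ℕ) (x : ℝ),
      deriv (f^[m+1]) x = deriv f (f^[m] x) * deriv (f^[m]) x := by
    intro m x
    have h : f^[m+1] = f ∘ f^[m] := Function.iterate_succ' f m
    rw [h, deriv_comp x hdf.differentiableAt ((hdf.iterate m).differentiableAt)]
  -- propagation of zero derivative
  have hprop : ∀ (x : ℝ) (j k : ℕ), deriv (f^[j]) x = 0 → deriv (f^[j+k]) x = 0 := by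
    intro x j k h
    induction k with
    | zero => exact h
    | succ k ih =>
      have : j + (k + 1) = (j + k) + 1 := rfl
      rw [this, hchain, ih, mul_zero]
  -- iterates stay in [a,b]
  have hmem : ∀ x ∈ Ioo a b, ∀ m : ℕ, f^[m] x ∈ Icc a b := by
    intro x hx m
    exact hmap.iterate m (Ioo_subset_Icc_self hx)
  -- hitting x_c early forces zero derivative later
  have hhit : ∀ (x : ℝ) (i m : ℕ), i < m → f^[i] x = x_c → deriv (f^[m]) x = 0 := by
    intro x i m him hix
    have h1 : deriv (f^[i+1]) x = 0 := by
      rw [hchain, hix, hkey, zero_mul]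
    have : m = (i + 1) + (m - (i + 1)) := by omega
    rw [this]
    exact hprop x (i+1) (m - (i+1)) h1
  intro n hn
  obtain ⟨m, rfl⟩ : ∃ m, n = m + 2 := ⟨n - 2, by omega⟩
  have hm1 : m + 2 - 1 = m + 1 := rfl
  have hm2 : m + 2 - 2 = m := rfl
  rw [hm1, hm2]
  set E0 := {x ∈ Ioo a b | deriv (f^[m+1]) x = 0} with hE0
  set S := {x ∈ Ioo a b | f^[m+1] x = x_c ∧ (∀ i : ℕ, i ≤ m → f^[i] x ≠ x_c) ∧
      deriv (f^[m+1]) x ≠ 0} with hS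
  have hEq : {x ∈ Ioo a b | deriv (f^[m+2]) x = 0} = E0 ∪ S := by
    ext x
    simp only [hE0, hS, mem_setOf_eq, mem_union]
    constructor
    · rintro ⟨hx, hd⟩
      rw [show m + 2 = (m+1)+1 from rfl, hchain] at hd
      rcases mul_eq_zero.mp hd with hd | hd
      · have hc : f^[m+1] x = x_c := (hzero _ (hmem x hx (m+1))).mp hd
        by_cases hd' : deriv (f^[m+1]) x = 0
        · exact Or.inl ⟨hx, hd'⟩
        · refine Or.inr ⟨hx, hc, ?_, hd'⟩
          intro i hi hix
          exact hd' (hhit x i (m+1) (by omega) hix)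
      · exact Or.inl ⟨hx, hd⟩
    · rintro (⟨hx, hd⟩ | ⟨hx, hc, _, _⟩)
      · refine ⟨hx, ?_⟩
        rw [show m + 2 = (m+1)+1 from rfl, hchain, hd, mul_zero]
      · refine ⟨hx, ?_⟩
        rw [show m + 2 = (m+1)+1 from rfl, hchain, hc, hkey, zero_mul]
  have hdisj : Disjoint E0 S := by
    rw [Set.disjoint_left]
    rintro x ⟨_, hd⟩ ⟨_, _, _, hd'⟩
    exact hd' hd
  have hFE0 : E0.Finite := hfin (m+1) (by omega)
  have hFS : S.Finite := by
    apply (hfin (m+2) (by omega)).subset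
    rw [hEq]
    exact Set.subset_union_right
  rw [hEq, Set.ncard_union_eq hdisj hFE0 hFS]
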